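/- If N is a graded 2-absorbing coprimary R-submodule of a graded R-module M and a is a homogeneous element of R with a ∉ Ann_R(N), then aN is a graded 2-absorbing coprimary R-submodule of M. -/

import Mathlib

open DirectSum Pointwise

variable {G : Type} [AddGroup G] [DecidableEq G]
variable {R : Type} [CommRing R] (𝒜 : G → AddSubgroup R) [GradedRing 𝒜]
variable {M : Type} [AddCommGroup M] [Module R M] (ℳ : G → AddSubgroup M)
  [SetLike.GradedSMul 𝒜 ℳ] [DirectSum.Decomposition ℳ]

/-- A submodule is graded if it contains every homogeneous component of each of
its elements. -/
def IsGradedSubmodule (N : Submodule R M) : Prop :=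
  ∀ (g : G) (m : M), m ∈ N → (DirectSum.decompose ℳ m g : M) ∈ N

/-- The graded radical of an ideal: all `r` such that for each `g` some positive
power of the degree-`g` component of `r` lies in `P`. -/
def gradRad (P : Ideal R) : Set R :=
  {r : R | ∀ g : G, ∃ n : ℕ, 0 < n ∧ ((DirectSum.decompose 𝒜 r g : R)) ^ n ∈ P}

/-- Graded 2-absorbing coprimary submodule. -/
def IsGr2AbsCoprimary (N : Submodule R M) : Prop :=
  N ≠ ⊥ ∧ IsGradedSubmodule ℳ N ∧
  ∀ x y : R, (∃ g, x ∈ 𝒜 g) → (∃ g, y ∈ 𝒜 g) →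
    ∀ K : Submodule R M, IsGradedSubmodule ℳ K →
      (∀ m ∈ N, (x * y) • m ∈ K) →
      x ∈ gradRad 𝒜 (K.colon N) ∨ y ∈ gradRad 𝒜 (K.colon N) ∨ x * y ∈ N.annihilator

/-- Graded 2-absorbing primary ideal. -/
def IsGr2AbsPrimaryIdeal (P : Ideal R) : Prop :=
  P ≠ ⊤ ∧ (∀ (g : G) (r : R), r ∈ P → (DirectSum.decompose 𝒜 r g : R) ∈ P) ∧
  ∀ a b c : R, (∃ g, a ∈ 𝒜 g) → (∃ g, b ∈ 𝒜 g) → (∃ g, c ∈ 𝒜 g) →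
    a * b * c ∈ P → a * b ∈ P ∨ a * c ∈ gradRad 𝒜 P ∨ b * c ∈ gradRad 𝒜 P

theorem decompose_smul_aux {g0 : G} {a : R} (hga : a ∈ 𝒜 g0) (g : G) (m : M) :
    (DirectSum.decompose ℳ (a • m) g : M) = a • (DirectSum.decompose ℳ m (-g0 + g) : M) := by
  refine DirectSum.Decomposition.inductionOn ℳ (motive := fun m => (DirectSum.decompose ℳ (a • m) g : M) = a • (DirectSum.decompose ℳ m (-g0 + g) : M)) ?_ ?_ ?_ m
  · simp
  · intro h x
    obtain ⟨x, hx⟩ := x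
    have hax : a • x ∈ ℳ (g0 + h) := SetLike.GradedSMul.smul_mem hga hx
    by_cases hg : g = g0 + h
    · subst hg
      rw [DirectSum.decompose_of_mem_same ℳ hax]
      rw [neg_add_cancel_left, DirectSum.decompose_of_mem_same ℳ hx]
    · rw [DirectSum.decompose_of_mem_ne ℳ hax (Ne.symm hg),
        DirectSum.decompose_of_mem_ne ℳ hx
          (fun hc => hg (by rw [hc, add_neg_cancel_left])), smul_zero]
  · intro m1 m2 h1 h2
    rw [smul_add, DirectSum.decompose_add, DirectSum.decompose_add, DirectSum.add_apply, DirectSum.add_apply,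
      AddSubgroup.coe_add, AddSubgroup.coe_add, h1, h2, smul_add]

theorem stmt_3 (N : Submodule R M) (hN : IsGr2AbsCoprimary 𝒜 ℳ N)
    (a : R) (ha : ∃ g, a ∈ 𝒜 g) (ha' : a ∉ N.annihilator) :
    IsGr2AbsCoprimary 𝒜 ℳ (a • N) := by
  obtain ⟨g0, hga⟩ := ha
  obtain ⟨hbot, hgr, habs⟩ := hN
  -- elements of a • N
  have memaN : ∀ p : M, p ∈ a • N ↔ ∃ n ∈ N, a • n = p := by
    intro p
    rw [← SetLike.mem_coe, Submodule.coe_pointwise_smul]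
    exact Set.mem_smul_set
  refine ⟨?_, ?_, ?_⟩
  · -- nonzero
    rw [Submodule.mem_annihilator] at ha'
    push_neg at ha'
    obtain ⟨n, hn, hn0⟩ := ha'
    intro hc
    apply hn0
    have : a • n ∈ a • N := Submodule.smul_mem_pointwise_smul n a N hn
    rw [hc] at this
    simpa using this
  · -- graded
    intro g m hm
    obtain ⟨n, hn, rfl⟩ := (memaN m).mp hm
    rw [decompose_smul_aux 𝒜 ℳ hga]
    exact Submodule.smul_mem_pointwise_smul _ a N (hgr _ n hn)
  · intro x y hx hy K hK hxyK
    -- K' = preimage of K under a • ·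
    set K' : Submodule R M := K.comap (LinearMap.lsmul R M a) with hK'def
    have memK' : ∀ m : M, m ∈ K' ↔ a • m ∈ K := fun m => Iff.rfl
    have hK'graded : IsGradedSubmodule ℳ K' := by
      intro g m hm
      rw [memK']
      have := hK (g0 + g) (a • m) ((memK' m).mp hm)
      rwa [decompose_smul_aux 𝒜 ℳ hga, neg_add_cancel_left] at this
    have hNK' : ∀ m ∈ N, (x * y) • m ∈ K' := by
      intro m hm
      rw [memK']
      have h1 : (x * y) • a • m ∈ K :=
        hxyK (a • m) (Submodule.smul_mem_pointwise_smul m a N hm)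
      rwa [smul_comm] at h1
    have hcolon : (K'.colon N : Ideal R) ≤ K.colon (a • N) := by
      intro r hr
      rw [Submodule.mem_colon] at hr ⊢
      intro p hp
      obtain ⟨n, hn, rfl⟩ := (memaN p).mp hp
      have := hr n hn
      rw [memK'] at this
      rwa [smul_comm]
    have hrad : ∀ z : R, z ∈ gradRad 𝒜 (K'.colon N) → z ∈ gradRad 𝒜 (K.colon (a • N)) := by
      intro z hz g
      obtain ⟨k, hk, hk2⟩ := hz g
      exact ⟨k, hk, hcolon hk2⟩
    rcases habs x y hx hy K' hK'graded hNK' with h | h | h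
    · exact Or.inl (hrad x h)
    · exact Or.inr (Or.inl (hrad y h))
    · refine Or.inr (Or.inr ?_)
      rw [Submodule.mem_annihilator] at h ⊢
      intro p hp
      obtain ⟨n, hn, rfl⟩ := (memaN p).mp hp
      rw [smul_comm, h n hn, smul_zero]
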